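/- Let H = [[0, ω],[−ω, −2γ]] with ω > 0, γ ≥ 0. Then the operator norm (with respect to the Euclidean norm) of exp(tH) satisfies ‖exp(tH)‖ ≤ 1 for all t ≥ 0. -/

import Mathlib

open Matrix NormedSpace

set_option synthInstance.maxHeartbeats 800000
set_option maxHeartbeats 1600000


noncomputable def Esymlin : (EuclideanSpace ℝ (Fin 2) →L[ℝ] EuclideanSpace ℝ (Fin 2)) →ₗ[ℝ] Matrix (Fin 2) (Fin 2) ℝ :=
{ toFun := (Matrix.toEuclideanCLM (𝕜 := ℝ) (n := Fin 2)).symm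
  map_add' := by intros; simp
  map_smul' := by intros; simp }

theorem exp_comm (H : Matrix (Fin 2) (Fin 2) ℝ) (t : ℝ) :
    Matrix.toEuclideanCLM (𝕜 := ℝ) (exp (t • H)) = exp (t • Matrix.toEuclideanCLM (𝕜 := ℝ) H) := by
  set E := Matrix.toEuclideanCLM (𝕜 := ℝ) (n := Fin 2)
  have hc : Continuous E.symm := LinearMap.continuous_of_finiteDimensional Esymlin
  set A := t • E H
  have hs : HasSum (fun n : ℕ => ((n.factorial : ℝ))⁻¹ • A ^ n) (exp A) := by
    have := expSeries_hasSum_exp (𝕂 := ℝ) A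
    simpa only [expSeries_apply_eq] using this
  have hs2 : HasSum (fun n : ℕ => ((n.factorial : ℝ))⁻¹ • (t • H) ^ n) (E.symm (exp A)) := by
    have := hs.map (Esymlin.toAddMonoidHom) hc
    convert this using 2 with n
    show ((n.factorial : ℝ))⁻¹ • (t • H) ^ n = E.symm (((n.factorial : ℝ))⁻¹ • A ^ n)
    rw [_root_.map_smul, map_pow, _root_.map_smul, StarAlgEquiv.symm_apply_apply]
    exact rfl
  have : exp (t • H) = E.symm (exp A) := by
    rw [exp_eq_tsum ℝ]
    exact hs2.tsum_eq
  rw [this, StarAlgEquiv.apply_symm_apply]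


/-- For H = [[0, ω],[−ω, −2γ]] with ω > 0, γ ≥ 0, the Euclidean operator norm
of exp(tH) is at most 1 for all t ≥ 0. -/
theorem stmt2 (γ ω : ℝ) (hω : 0 < ω) (hγ : 0 ≤ γ)
    (H : Matrix (Fin 2) (Fin 2) ℝ) (hH : H = !![0, ω; -ω, -2 * γ]) :
    ∀ t : ℝ, 0 ≤ t →
      ‖Matrix.toEuclideanCLM (𝕜 := ℝ) (NormedSpace.exp (t • H))‖ ≤ 1 := by
  intro t ht
  rw [exp_comm]
  set A := Matrix.toEuclideanCLM (𝕜 := ℝ) H with hAdef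
  have key : ∀ y : EuclideanSpace ℝ (Fin 2), inner (𝕜 := ℝ) (A y) y ≤ 0 := by
    intro y
    have hcoord : ∀ i, A y i = (H *ᵥ (WithLp.equiv 2 (Fin 2 → ℝ) y)) i := fun i => rfl
    rw [PiLp.inner_apply]
    simp only [RCLike.inner_apply, starRingEnd_apply, star_trivial]
    rw [Fin.sum_univ_two, hcoord 0, hcoord 1]
    subst hH
    simp [Matrix.mulVec, dotProduct, Fin.sum_univ_two]
    nlinarith [mul_self_nonneg (y 1 : ℝ), mul_nonneg hγ (mul_self_nonneg (y 1 : ℝ))]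
  apply ContinuousLinearMap.opNorm_le_bound _ zero_le_one
  intro x
  rw [one_mul]
  set f : ℝ → EuclideanSpace ℝ (Fin 2) := fun s => NormedSpace.exp (s • A) x with hfdef
  have hf : ∀ s, HasDerivAt f (A (f s)) s := by
    intro s
    have h1 : HasDerivAt (fun u : ℝ => NormedSpace.exp (u • A))
        (A * NormedSpace.exp (s • A)) s := hasDerivAt_exp_smul_const' A s
    have h2 := h1.clm_apply (hasDerivAt_const s x)
    simpa using h2
  set g : ℝ → ℝ := fun s => inner (𝕜 := ℝ) (f s) (f s) with hgdef
  have hg : ∀ s, HasDerivAt g (2 * inner (𝕜 := ℝ) (A (f s)) (f s)) s := by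
    intro s
    have := HasDerivAt.inner ℝ (hf s) (hf s)
    refine this.congr_deriv ?_
    rw [real_inner_comm (f s) (A (f s))]
    ring
  have mono : AntitoneOn g (Set.Ici (0:ℝ)) := by
    apply antitoneOn_of_deriv_nonpos (convex_Ici 0)
    · exact fun s _ => ((hg s).continuousAt).continuousWithinAt
    · exact fun s _ => ((hg s).differentiableAt).differentiableWithinAt
    · intro s _
      rw [(hg s).deriv]
      have := key (f s)
      linarith
  have hle : g t ≤ g 0 := mono Set.self_mem_Ici (Set.mem_Ici.mpr ht) ht
  have hg0 : g 0 = ‖x‖ ^ 2 := by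
    have : f 0 = x := by
      rw [hfdef]; dsimp only; rw [show (0:ℝ) • A = 0 from zero_smul ℝ A, NormedSpace.exp_zero, ContinuousLinearMap.one_apply]
    rw [hgdef]; dsimp only; rw [this, real_inner_self_eq_norm_sq]
  have hgt : g t = ‖f t‖ ^ 2 := by
    rw [hgdef]; dsimp only; rw [real_inner_self_eq_norm_sq]
  have : ‖f t‖ ^ 2 ≤ ‖x‖ ^ 2 := by rw [← hgt, ← hg0]; exact hle
  nlinarith [norm_nonneg (f t), norm_nonneg x]
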